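/- Let r < 1, u, v, w ∈ ℝ, α = v + w, β = r·w − u, and m ∈ [0,1]. Define ξ̄₁ = m/(1 − r·m)², ξ̄₂ = m²/(1 − r·m)², ζ̄ = m/(1 − r·m). Then the triple (ξ̄₁, ξ̄₂, ζ̄) satisfies the symmetric obedience and positivity conditions, namely ξ̄₁ = r·ξ̄₂ + ζ̄ and ξ̄₁ ≥ ξ̄₂ ≥ ζ̄², and its designer value satisfies v·ξ̄₁ + u·ξ̄₂ + w·ζ̄ = V_tg(m), where V_tg(m) = (α·m − β·m²)/(1 − r·m)². -/
import Mathlib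

/-- symmetric equilibrium moment of targeted disclosure.  Let `r < 1`,
`u v w : ℝ`, `α = v + w`, `β = r·w − u`, `m ∈ [0,1]`, and set `ξ̄₁ = m/(1−rm)²`,
`ξ̄₂ = m²/(1−rm)²`, `ζ̄ = m/(1−rm)`.  Then `(ξ̄₁, ξ̄₂, ζ̄)` satisfies symmetric obedience
`ξ̄₁ = r·ξ̄₂ + ζ̄` and positivity `ξ̄₁ ≥ ξ̄₂ ≥ ζ̄²`, and its designer value satisfies
`v·ξ̄₁ + u·ξ̄₂ + w·ζ̄ = V_tg(m) = (α·m − β·m²)/(1−rm)²`. -/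
theorem symmetric_eqMoment_value (r u v w m : ℝ) (hr : r < 1)
    (hm : m ∈ Set.Icc (0:ℝ) 1) :
    m / (1 - r * m) ^ 2 = r * (m ^ 2 / (1 - r * m) ^ 2) + m / (1 - r * m) ∧
    m ^ 2 / (1 - r * m) ^ 2 ≤ m / (1 - r * m) ^ 2 ∧
    (m / (1 - r * m)) ^ 2 ≤ m ^ 2 / (1 - r * m) ^ 2 ∧
    v * (m / (1 - r * m) ^ 2) + u * (m ^ 2 / (1 - r * m) ^ 2) + w * (m / (1 - r * m)) =
      ((v + w) * m - (r * w - u) * m ^ 2) / (1 - r * m) ^ 2 := by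
  obtain ⟨hm0, hm1⟩ := hm
  have hpos : 0 < 1 - r * m := by
    rcases lt_or_eq_of_le hm1 with h | h
    · nlinarith [mul_nonneg (sub_nonneg.2 hr.le) hm0]
    · subst h; linarith
  have hne : (1 - r * m) ≠ 0 := ne_of_gt hpos
  refine ⟨by field_simp; ring, ?_, ?_, by field_simp; ring⟩
  · apply div_le_div_of_nonneg_right ?_ (by positivity)
    nlinarith
  · rw [div_pow]
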